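/- For positive reals x ≠ y, the logarithmic mean L(x,y) = (x-y)/(log x - log y) satisfies 1/L(x,y) = ∫₀¹ dt/H_t(x,y), where H_t(x,y) = H((x+y)/2 + t(x-y)/2, (x+y)/2 - t(x-y)/2) and H(a,b) = 2ab/(a+b) is the harmonic mean. -/

import Mathlib

lemma aux_harm (A B c : ℝ) (hA : A ≠ 0) (hB : B ≠ 0) (hc : c ≠ 0) :
    1 / (2 * A * B / (A + B)) = 1 / c * (A⁻¹ * (c / 2) - B⁻¹ * -(c / 2)) := by
  rw [one_div_div]
  field_simp
  ring

theorem stmt_19 (x y : ℝ) (hx : 0 < x) (hy : 0 < y) (hxy : x ≠ y) :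
    1 / ((x - y) / (Real.log x - Real.log y)) =
      ∫ t in (0:ℝ)..1,
        1 / (2 * ((x + y) / 2 + t * (x - y) / 2) * ((x + y) / 2 - t * (x - y) / 2) /
          (((x + y) / 2 + t * (x - y) / 2) + ((x + y) / 2 - t * (x - y) / 2))) := by
  have hxy' : x - y ≠ 0 := sub_ne_zero.mpr hxy
  have hxy2 : x + y ≠ 0 := by positivity
  have hlog : Real.log x - Real.log y ≠ 0 := by
    intro h
    exact hxy (Real.log_injOn_pos (Set.mem_Ioi.mpr hx) (Set.mem_Ioi.mpr hy) (by linarith))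
  set g : ℝ → ℝ := fun t =>
    1 / (2 * ((x + y) / 2 + t * (x - y) / 2) * ((x + y) / 2 - t * (x - y) / 2) /
      (((x + y) / 2 + t * (x - y) / 2) + ((x + y) / 2 - t * (x - y) / 2))) with hg
  set F : ℝ → ℝ := fun t =>
    (1 / (x - y)) * (Real.log ((x + y) / 2 + t * (x - y) / 2) -
      Real.log ((x + y) / 2 - t * (x - y) / 2)) with hF
  have ha : ∀ t ∈ Set.Icc (0:ℝ) 1, 0 < (x + y) / 2 + t * (x - y) / 2 := by
    rintro t ⟨ht0, ht1⟩
    nlinarith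
  have hb : ∀ t ∈ Set.Icc (0:ℝ) 1, 0 < (x + y) / 2 - t * (x - y) / 2 := by
    rintro t ⟨ht0, ht1⟩
    nlinarith
  have hderiv : ∀ t ∈ Set.Icc (0:ℝ) 1, HasDerivAt F (g t) t := by
    intro t ht
    have hat := ha t ht
    have hbt := hb t ht
    have h1 : HasDerivAt (fun t : ℝ => (x + y) / 2 + t * (x - y) / 2) ((x - y) / 2) t := by
      have := (((hasDerivAt_id t).mul_const (x - y)).div_const 2).const_add ((x + y) / 2)
      simpa using this
    have h2 : HasDerivAt (fun t : ℝ => (x + y) / 2 - t * (x - y) / 2) (-((x - y) / 2)) t := by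
      have := (((hasDerivAt_id t).mul_const (x - y)).div_const 2).const_sub ((x + y) / 2)
      simpa using this
    have l1 := (Real.hasDerivAt_log hat.ne').comp t h1
    have l2 := (Real.hasDerivAt_log hbt.ne').comp t h2
    have key := ((l1.sub l2).const_mul (1 / (x - y)))
    convert key using 1
    · rfl
    · rfl
    · rfl
    simp only [hg]
    exact aux_harm _ _ _ hat.ne' hbt.ne' hxy' 
  have hcont : ContinuousOn g (Set.Icc (0:ℝ) 1) := by
    apply ContinuousOn.div continuousOn_const
    · apply ContinuousOn.div
      · exact (by fun_prop : Continuous fun t : ℝ =>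
          2 * ((x + y) / 2 + t * (x - y) / 2) * ((x + y) / 2 - t * (x - y) / 2)).continuousOn
      · exact (by fun_prop : Continuous fun t : ℝ =>
          ((x + y) / 2 + t * (x - y) / 2) + ((x + y) / 2 - t * (x - y) / 2)).continuousOn
      · intro t _
        have : ((x + y) / 2 + t * (x - y) / 2) + ((x + y) / 2 - t * (x - y) / 2) = x + y := by ring
        rw [this]; exact hxy2
    · intro t ht
      have hat := ha t ht
      have hbt := hb t ht
      have hsum : ((x + y) / 2 + t * (x - y) / 2) + ((x + y) / 2 - t * (x - y) / 2) = x + y := by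
        ring
      rw [div_ne_zero_iff, hsum]
      exact ⟨(mul_pos (mul_pos two_pos hat) hbt).ne', hxy2⟩
  have hint : IntervalIntegrable g MeasureTheory.volume 0 1 :=
    (hcont.mono (by rw [Set.uIcc_of_le (by norm_num : (0:ℝ) ≤ 1)])).intervalIntegrable
  rw [intervalIntegral.integral_eq_sub_of_hasDerivAt (fun t ht => hderiv t (by
    rwa [Set.uIcc_of_le (by norm_num : (0:ℝ) ≤ 1)] at ht)) hint]
  rw [hF]
  simp only
  have hx1 : (x + y) / 2 + 1 * (x - y) / 2 = x := by ring
  have hy1 : (x + y) / 2 - 1 * (x - y) / 2 = y := by ring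
  have hx0 : (x + y) / 2 + 0 * (x - y) / 2 = (x + y) / 2 := by ring
  have hy0 : (x + y) / 2 - 0 * (x - y) / 2 = (x + y) / 2 := by ring
  rw [hx1, hy1, hx0, hy0, sub_self, mul_zero, sub_zero, one_div_div, mul_comm,
    mul_one_div]
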